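/- Let E be an exponential family on a finite set X. If the topological closure of E (in ℝ^X) does not equal the set of all probability distributions on X, then sup_P inf_{Q∈E} D(P‖Q) ≥ log 2, where the supremum is over all probability distributions P on X. -/

import Mathlib

open scoped BigOperators Classical

noncomputable section

variable {X : Type*}

/-- A probability distribution on a finite set `X`. -/
def IsProb [Fintype X] (P : X → ℝ) : Prop :=
  (∀ x, 0 ≤ P x) ∧ ∑ x, P x = 1

/-- Information divergence `D(P‖Q)` with values in `EReal`, equal to `⊤` if the
support of `P` is not contained in the support of `Q`.  (The convention
`0 · log 0 = 0` holds automatically since `Real.log 0 = 0`.) -/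
def KL [Fintype X] (P Q : X → ℝ) : EReal :=
  if ∀ x, Q x = 0 → P x = 0 then ((∑ x, P x * Real.log (P x / Q x) : ℝ) : EReal) else ⊤

/-- The exponential family with strictly positive reference measure `ν` and extended
tangent space `T` (a subspace of `ℝ^X` containing the constants): the set of strictly
positive probability distributions `P` with `log (P/ν) ∈ T`. -/
def expFam [Fintype X] (ν : X → ℝ) (T : Submodule ℝ (X → ℝ)) : Set (X → ℝ) :=
  {P | (∀ x, 0 < P x) ∧ ∑ x, P x = 1 ∧ (fun x => Real.log (P x / ν x)) ∈ T}

/-- `sup_P inf_{Q ∈ E} D(P‖Q)`, supremum over all probability distributions `P`. -/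
def maxDiv [Fintype X] (E : Set (X → ℝ)) : EReal :=
  ⨆ P ∈ {P : X → ℝ | IsProb P}, ⨅ Q ∈ E, KL P Q

/-- The orthogonal complement of `T` in `ℝ^X` w.r.t. the standard inner product
(the normal space of the exponential family with extended tangent space `T`). -/
def orthSpace [Fintype X] (T : Submodule ℝ (X → ℝ)) : Set (X → ℝ) :=
  {u | ∀ t ∈ T, ∑ x, u x * t x = 0}

/-- A circuit vector of a set `N ⊆ ℝ^X`: a nonzero element whose support is minimal,
i.e. every `u ∈ N` with `supp u ⊆ supp v` is a scalar multiple of `v`. -/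
def IsCircuitVector (N : Set (X → ℝ)) (v : X → ℝ) : Prop :=
  v ∈ N ∧ v ≠ 0 ∧ ∀ u ∈ N, Function.support u ⊆ Function.support v → ∃ α : ℝ, u = α • v

/-- A circuit of `N`: the support of a circuit vector. -/
def IsCircuit (N : Set (X → ℝ)) (σ : Set X) : Prop :=
  ∃ v, IsCircuitVector N v ∧ σ = Function.support v

/-- The closed partition model of the partition given by the equivalence relation `r`:
all probability distributions constant on each block. -/
def partModel [Fintype X] (r : X → X → Prop) : Set (X → ℝ) :=
  {Q | IsProb Q ∧ ∀ x y, r x y → Q x = Q y}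

/-- The partition exponential family of the partition given by the equivalence
relation `r`: all strictly positive probability distributions constant on each block. -/
def partExpFam [Fintype X] (r : X → X → Prop) : Set (X → ℝ) :=
  {P | (∀ x, 0 < P x) ∧ ∑ x, P x = 1 ∧ ∀ x y, r x y → P x = P y}

/-- The set `X̲` of points not annihilated by all of `N`. -/
def underlineSet (N : Set (X → ℝ)) : Set X := {x | ∃ v ∈ N, v x ≠ 0}

/-- The relation `x ∼ y` : every `v ∈ N` with `v x ≠ 0` has `v y ≠ 0`. -/
def coRel (N : Set (X → ℝ)) (x y : X) : Prop := ∀ v ∈ N, v x ≠ 0 → v y ≠ 0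

/-- `Z` is an equivalence class of `∼` on `X̲`. -/
def IsClassOf (N : Set (X → ℝ)) (Z : Set X) : Prop :=
  ∃ x ∈ underlineSet N, Z = {y | coRel N x y}

end

/-- Gibbs' inequality. -/
private lemma gibbs' {X : Type*} [Fintype X] (M Q : X → ℝ) (hM : ∀ x, 0 ≤ M x)
    (hQ : ∀ x, 0 < Q x) (hMs : ∑ x, M x = 1) (hQs : ∑ x, Q x = 1) :
    ∑ x, M x * Real.log (Q x) ≤ ∑ x, M x * Real.log (M x) := by
  have h : ∀ x, M x * Real.log (Q x) - M x * Real.log (M x) ≤ Q x - M x := by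
    intro x
    rcases eq_or_lt_of_le (hM x) with h0 | h0
    · simp only [← h0, zero_mul, sub_zero, sub_self]
      exact (hQ x).le
    · have hlog := Real.log_le_sub_one_of_pos (div_pos (hQ x) h0)
      rw [Real.log_div (hQ x).ne' h0.ne'] at hlog
      have h2 := mul_le_mul_of_nonneg_left hlog h0.le
      have h3 : M x * (Q x / M x - 1) = Q x - M x := by field_simp
      nlinarith
  have h4 : ∑ x, (M x * Real.log (Q x) - M x * Real.log (M x)) ≤ ∑ x, (Q x - M x) :=
    Finset.sum_le_sum fun x _ => h x
  rw [Finset.sum_sub_distrib, Finset.sum_sub_distrib, hMs, hQs] at h4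
  linarith

private lemma xlog_half {a : ℝ} (ha : 0 ≤ a) :
    a * Real.log (a / 2) = a * Real.log a - a * Real.log 2 := by
  rcases eq_or_lt_of_le ha with h0 | h0
  · simp [← h0]
  · rw [Real.log_div h0.ne' two_ne_zero]; ring

private lemma xlog_div {a b : ℝ} (ha : 0 ≤ a) (hb : 0 < b) :
    a * Real.log (a / b) = a * Real.log a - a * Real.log b := by
  rcases eq_or_lt_of_le ha with h0 | h0
  · simp [← h0]
  · rw [Real.log_div h0.ne' hb.ne']; ring

/-- Key half-step: if the positive part side has the larger "constant", it gives
divergence at least `log 2` from every element of the family. -/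
private lemma half_key {X : Type*} [Fintype X] (ν : X → ℝ) (hν : ∀ x, 0 < ν x)
    (T : Submodule ℝ (X → ℝ)) (v : X → ℝ)
    (hvT : ∀ t ∈ T, ∑ x, v x * t x = 0)
    (hp1 : ∑ x, max (v x) 0 = 1) (hq1 : ∑ x, max (-v x) 0 = 1)
    (hK : 0 ≤ (∑ x, max (v x) 0 * Real.log (max (v x) 0))
        - (∑ x, max (-v x) 0 * Real.log (max (-v x) 0))
        - ∑ x, v x * Real.log (ν x)) :
    ∀ Q ∈ expFam ν T, Real.log 2 ≤ ∑ x, max (v x) 0 * Real.log (max (v x) 0 / Q x) := by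
  rintro Q ⟨hQpos, hQsum, hQT⟩
  set p : X → ℝ := fun x => max (v x) 0 with hp
  set q : X → ℝ := fun x => max (-v x) 0 with hq
  have hp0 : ∀ x, 0 ≤ p x := fun x => le_max_right _ _
  have hq0 : ∀ x, 0 ≤ q x := fun x => le_max_right _ _
  have hpq : ∀ x, p x - q x = v x := fun x => max_zero_sub_max_neg_zero_eq_self (v x)
  -- expand the two divergences
  have hfeq : ∑ x, p x * Real.log (p x / Q x)
      = (∑ x, p x * Real.log (p x)) - ∑ x, p x * Real.log (Q x) := by
    rw [← Finset.sum_sub_distrib]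
    exact Finset.sum_congr rfl fun x _ => xlog_div (hp0 x) (hQpos x)
  have hgeq : ∑ x, q x * Real.log (q x / Q x)
      = (∑ x, q x * Real.log (q x)) - ∑ x, q x * Real.log (Q x) := by
    rw [← Finset.sum_sub_distrib]
    exact Finset.sum_congr rfl fun x _ => xlog_div (hq0 x) (hQpos x)
  -- the linear constraint: ∑ v log Q = ∑ v log ν
  have hlin : ∑ x, v x * Real.log (Q x) = ∑ x, v x * Real.log (ν x) := by
    have h0 := hvT _ hQT
    have : ∑ x, v x * (Real.log (Q x) - Real.log (ν x)) = 0 := by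
      rw [← h0]
      exact Finset.sum_congr rfl fun x _ => by
        rw [Real.log_div (hQpos x).ne' (hν x).ne']
    simp only [mul_sub, Finset.sum_sub_distrib] at this
    linarith
  have hdiff : (∑ x, p x * Real.log (Q x)) - ∑ x, q x * Real.log (Q x)
      = ∑ x, v x * Real.log (ν x) := by
    rw [← hlin, ← Finset.sum_sub_distrib]
    exact Finset.sum_congr rfl fun x _ => by rw [← sub_mul, hpq]
  -- Gibbs against the midpoint M = (p+q)/2
  set M : X → ℝ := fun x => (p x + q x) / 2 with hM
  have hMsum : ∑ x, M x = 1 := by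
    simp only [hM, div_eq_mul_inv, ← Finset.sum_mul, Finset.sum_add_distrib, hp1, hq1]
    norm_num
  have hGibbs := gibbs' M Q (fun x => by positivity) hQpos hMsum hQsum
  -- midpoint entropy: disjoint supports
  have hmid : ∑ x, (p x + q x) * Real.log (M x)
      = (∑ x, p x * Real.log (p x)) + (∑ x, q x * Real.log (q x)) - 2 * Real.log 2 := by
    have hterm : ∀ x, (p x + q x) * Real.log (M x)
        = p x * Real.log (p x) + q x * Real.log (q x) - (p x + q x) * Real.log 2 := by
      intro x
      rcases le_total (v x) 0 with hvx | hvx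
      · have hpx : p x = 0 := max_eq_right hvx
        have : M x = q x / 2 := by rw [hM]; simp [hpx]
        rw [this, hpx]
        have := xlog_half (hq0 x)
        simp only [zero_add, zero_mul]
        linarith
      · have hqx : q x = 0 := max_eq_right (neg_nonpos_of_nonneg hvx)
        have : M x = p x / 2 := by rw [hM]; simp [hqx]
        rw [this, hqx]
        have := xlog_half (hp0 x)
        simp only [add_zero, zero_mul]
        linarith
    calc ∑ x, (p x + q x) * Real.log (M x)
        = ∑ x, (p x * Real.log (p x) + q x * Real.log (q x) - (p x + q x) * Real.log 2) :=
          Finset.sum_congr rfl fun x _ => hterm x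
      _ = _ := by
          simp only [Finset.sum_sub_distrib, Finset.sum_add_distrib, ← Finset.sum_mul,
            hp1, hq1]
          ring
  -- combine
  have hsum2 : ∑ x, (p x + q x) * Real.log (Q x)
      = 2 * ∑ x, M x * Real.log (Q x) := by
    rw [Finset.mul_sum]
    exact Finset.sum_congr rfl fun x _ => by rw [hM]; ring
  have hsum3 : ∑ x, (p x + q x) * Real.log (M x)
      = 2 * ∑ x, M x * Real.log (M x) := by
    rw [Finset.mul_sum]
    exact Finset.sum_congr rfl fun x _ => by rw [hM]; ring
  have hsplit : ∑ x, (p x + q x) * Real.log (Q x)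
      = (∑ x, p x * Real.log (Q x)) + ∑ x, q x * Real.log (Q x) := by
    rw [← Finset.sum_add_distrib]
    exact Finset.sum_congr rfl fun x _ => by ring
  linarith [hGibbs, hmid, hsum2, hsum3, hsplit, hfeq, hgeq, hdiff, hK]

/-- if the closure of an exponential family is not the whole probability
simplex, then `sup_P inf_{Q ∈ E} D(P‖Q) ≥ log 2`. -/
theorem stmt2 (X : Type*) [Fintype X] [Nonempty X]
    (ν : X → ℝ) (hν : ∀ x, 0 < ν x)
    (T : Submodule ℝ (X → ℝ)) (h1 : (fun _ => (1 : ℝ)) ∈ T)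
    (hne : closure (expFam ν T) ≠ {P : X → ℝ | IsProb P}) :
    ((Real.log 2 : ℝ) : EReal) ≤ maxDiv (expFam ν T) := by
  classical
  -- Step 1: T ≠ ⊤
  have hT : T ≠ ⊤ := by
    intro hTtop
    apply hne
    apply Set.Subset.antisymm
    · -- closure E ⊆ simplex
      have hS : IsClosed {P : X → ℝ | IsProb P} := by
        have : {P : X → ℝ | IsProb P}
            = (⋂ x, {P : X → ℝ | 0 ≤ P x}) ∩ {P : X → ℝ | ∑ x, P x = 1} := by
          ext P
          simp only [Set.mem_setOf_eq, Set.mem_inter_iff, Set.mem_iInter, IsProb]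
        rw [this]
        exact IsClosed.inter
          (isClosed_iInter fun x => isClosed_le continuous_const (continuous_apply x))
          (isClosed_eq (continuous_finset_sum _ fun x _ => continuous_apply x)
            continuous_const)
      refine closure_minimal ?_ hS
      rintro P ⟨hpos, hsum, -⟩
      exact ⟨fun x => (hpos x).le, hsum⟩
    · -- simplex ⊆ closure E
      intro P hP
      obtain ⟨hP0, hP1⟩ := hP
      set n : ℝ := (Fintype.card X : ℝ) with hn
      have hnpos : 0 < n := by
        rw [hn]; exact_mod_cast Fintype.card_pos
      set φ : ℝ → X → ℝ := fun t x => (1 - t) * P x + t / n with hφ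
      have hcont : Filter.Tendsto φ (nhdsWithin 0 (Set.Ioi 0)) (nhds P) := by
        have hc : Continuous φ := by
          apply continuous_pi
          intro x
          fun_prop
        have := hc.tendsto 0
        have hφ0 : φ 0 = P := by
          funext x; simp [hφ]
        rw [hφ0] at this
        exact this.mono_left nhdsWithin_le_nhds
      refine mem_closure_of_tendsto hcont ?_
      have hIoo : Set.Ioo (0 : ℝ) 1 ∈ nhdsWithin (0 : ℝ) (Set.Ioi 0) :=
        Ioo_mem_nhdsGT_of_mem ⟨le_refl 0, one_pos⟩
      filter_upwards [hIoo] with t ht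
      refine ⟨fun x => ?_, ?_, ?_⟩
      · have h1t : 0 ≤ 1 - t := by linarith [ht.2]
        have := mul_nonneg h1t (hP0 x)
        have htn : 0 < t / n := div_pos ht.1 hnpos
        simp only [hφ]
        linarith
      · simp only [hφ, Finset.sum_add_distrib, ← Finset.mul_sum, hP1]
        rw [Finset.sum_const, Finset.card_univ, nsmul_eq_mul]
        rw [hn]
        field_simp
        ring
      · rw [hTtop]; trivial
  -- Step 2: a nonzero functional vanishing on T, represented as a vector u
  obtain ⟨f, hf0, hfT⟩ :=
    Submodule.exists_dual_map_eq_bot_of_lt_top (lt_top_iff_ne_top.mpr hT) inferInstance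
  have hfT' : ∀ t ∈ T, f t = 0 := by
    intro t ht
    have : f t ∈ T.map f := Submodule.mem_map_of_mem ht
    rwa [hfT, Submodule.mem_bot] at this
  set u : X → ℝ := fun x => f (fun j => if x = j then (1 : ℝ) else 0) with hu
  have hrep : ∀ t : X → ℝ, f t = ∑ x, t x * u x := by
    intro t
    conv_lhs => rw [pi_eq_sum_univ t]
    rw [map_sum]
    exact Finset.sum_congr rfl fun x _ => by rw [map_smul, smul_eq_mul, hu]
  have huT : ∀ t ∈ T, ∑ x, u x * t x = 0 := by
    intro t ht
    rw [← hfT' t ht, hrep t]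
    exact Finset.sum_congr rfl fun x _ => mul_comm _ _
  have hu0 : u ≠ 0 := by
    intro h
    apply hf0
    refine LinearMap.ext fun t => ?_
    rw [hrep t, h]
    simp
  -- Step 3: normalize
  have hsum0 : ∑ x, u x = 0 := by
    have := huT _ h1
    simpa using this
  set s : ℝ := ∑ x, max (u x) 0 with hs
  have hs' : ∑ x, max (-u x) 0 = s := by
    have he : ∑ x, (max (u x) 0 - max (-u x) 0) = ∑ x, u x :=
      Finset.sum_congr rfl fun x _ => max_zero_sub_max_neg_zero_eq_self (u x)
    rw [Finset.sum_sub_distrib, hsum0] at he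
    rw [hs]; linarith
  have hspos : 0 < s := by
    obtain ⟨x0, hx0⟩ := Function.ne_iff.mp hu0
    rcases lt_or_gt_of_ne (show u x0 ≠ 0 from hx0) with hneg | hpos
    · have h1' : -u x0 ≤ ∑ x, max (-u x) 0 := by
        calc -u x0 ≤ max (-u x0) 0 := le_max_left _ _
          _ ≤ ∑ x, max (-u x) 0 :=
            Finset.single_le_sum (f := fun x => max (-u x) 0)
              (fun x _ => le_max_right _ _) (Finset.mem_univ x0)
      rw [hs'] at h1'
      linarith
    · have h1' : u x0 ≤ s := by
        rw [hs]
        calc u x0 ≤ max (u x0) 0 := le_max_left _ _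
          _ ≤ ∑ x, max (u x) 0 :=
            Finset.single_le_sum (f := fun x => max (u x) 0)
              (fun x _ => le_max_right _ _) (Finset.mem_univ x0)
      linarith
  set v : X → ℝ := fun x => u x / s with hv
  have hvT : ∀ t ∈ T, ∑ x, v x * t x = 0 := by
    intro t ht
    have : ∑ x, v x * t x = (∑ x, u x * t x) / s := by
      rw [Finset.sum_div]
      exact Finset.sum_congr rfl fun x _ => by rw [hv]; ring
    rw [this, huT t ht, zero_div]
  have hmaxv : ∀ x, max (v x) 0 = max (u x) 0 / s := by
    intro x
    have h := max_div_div_right hspos.le (u x) 0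
    rw [zero_div] at h
    simpa [hv] using h
  have hmaxnv : ∀ x, max (-v x) 0 = max (-u x) 0 / s := by
    intro x
    have h := max_div_div_right hspos.le (-u x) 0
    rw [zero_div] at h
    simp only [hv]
    rw [← neg_div]
    exact h
  have hp1 : ∑ x, max (v x) 0 = 1 := by
    simp only [hmaxv]
    rw [← Finset.sum_div, ← hs, div_self hspos.ne']
  have hq1 : ∑ x, max (-v x) 0 = 1 := by
    simp only [hmaxnv]
    rw [← Finset.sum_div, hs', div_self hspos.ne']
  -- Step 4: choose the good half
  set K : ℝ := (∑ x, max (v x) 0 * Real.log (max (v x) 0))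
      - (∑ x, max (-v x) 0 * Real.log (max (-v x) 0))
      - ∑ x, v x * Real.log (ν x) with hKdef
  obtain ⟨P, hPprob, hlow⟩ : ∃ P : X → ℝ, IsProb P ∧
      ∀ Q ∈ expFam ν T, Real.log 2 ≤ ∑ x, P x * Real.log (P x / Q x) := by
    rcases le_total 0 K with hK | hK
    · exact ⟨fun x => max (v x) 0, ⟨fun x => le_max_right _ _, hp1⟩,
        half_key ν hν T v hvT hp1 hq1 hK⟩
    · refine ⟨fun x => max (-v x) 0, ⟨fun x => le_max_right _ _, hq1⟩, ?_⟩
      have hw : ∀ t ∈ T, ∑ x, (-v) x * t x = 0 := by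
        intro t ht
        have := hvT t ht
        simp only [Pi.neg_apply, neg_mul, Finset.sum_neg_distrib]
        linarith
      have hwp : ∑ x, max ((-v) x) 0 = 1 := hq1
      have hwq : ∑ x, max (-(-v) x) 0 = 1 := by simpa using hp1
      have hwK : 0 ≤ (∑ x, max ((-v) x) 0 * Real.log (max ((-v) x) 0))
          - (∑ x, max (-(-v) x) 0 * Real.log (max (-(-v) x) 0))
          - ∑ x, (-v) x * Real.log (ν x) := by
        have hneg : ∑ x, (-v) x * Real.log (ν x) = -∑ x, v x * Real.log (ν x) := by
          simp [Finset.sum_neg_distrib]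
        simp only [Pi.neg_apply, neg_neg] at hneg ⊢
        rw [hKdef] at hK
        linarith
      have := half_key ν hν T (-v) hw hwp hwq hwK
      simpa using this
  -- Step 5: conclude in EReal
  have hinf : ((Real.log 2 : ℝ) : EReal) ≤ ⨅ Q ∈ expFam ν T, KL P Q := by
    refine le_iInf₂ fun Q hQ => ?_
    rw [KL, if_pos (fun x hx => absurd hx (hQ.1 x).ne')]
    exact_mod_cast hlow Q hQ
  refine hinf.trans ?_
  exact le_iSup₂ (f := fun P (_ : P ∈ {P : X → ℝ | IsProb P}) => ⨅ Q ∈ expFam ν T, KL P Q)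
    P hPprob
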